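/- As formal power series over ℚ: ∑_{n≥0} U_n x^n = x + (1-x) ∑_{n≥0} n! · x^n/(1+x)^{2n+1}, where U_0 = 1, U_1 = 0, and for n ≥ 2, U_n = ∑_{k=0}^{n} (-1)^k (2n/(2n-k)) C(2n-k,k) (n-k)!. -/

import Mathlib

open Finset PowerSeries

private lemma invA : ((1 + X : PowerSeries ℚ))⁻¹ = PowerSeries.mk fun n => (-1 : ℚ)^n := by
  rw [PowerSeries.inv_eq_iff_mul_eq_one (by simp)]
  ext m
  cases m with
  | zero => simp
  | succ m =>
    rw [mul_add, mul_one, map_add, coeff_succ_mul_X, coeff_mk, coeff_mk]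
    simp [pow_succ]

private lemma hs (k m : ℕ) : ∑ j ∈ range (m+1), (k+j).choose j = (k+m+1).choose m := by
  induction m with
  | zero => simp
  | succ m ih =>
    rw [sum_range_succ, ih]
    rw [show k+(m+1)+1 = (k+m+1)+1 by ring, Nat.choose_succ_succ' (k+m+1) m]
    ring_nf

private lemma invpow (k : ℕ) : ((1 + X : PowerSeries ℚ))⁻¹ ^ (k+1) =
    PowerSeries.mk fun j => (-1 : ℚ)^j * ((k+j).choose j : ℚ) := by
  induction k with
  | zero => simp [invA]
  | succ k ih =>
    rw [pow_succ, ih, invA]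
    ext m
    rw [PowerSeries.coeff_mul, Finset.Nat.sum_antidiagonal_eq_sum_range_succ_mk, coeff_mk]
    have : ∀ j ∈ range (m+1), (coeff (R := ℚ) j) (PowerSeries.mk fun j => (-1:ℚ)^j * ((k+j).choose j : ℚ))
        * (coeff (R := ℚ) (m-j)) (PowerSeries.mk fun n => (-1:ℚ)^n)
        = (-1:ℚ)^m * ((k+j).choose j : ℚ) := by
      intro j hj
      rw [coeff_mk, coeff_mk]
      have hjm : j ≤ m := by simpa using Nat.lt_succ_iff.mp (mem_range.mp hj)
      rw [mul_comm ((-1:ℚ)^j) _, mul_assoc, ← pow_add]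
      rw [Nat.add_sub_cancel' hjm, mul_comm]
    rw [Finset.sum_congr rfl this, ← Finset.mul_sum]
    have : ∑ j ∈ range (m+1), ((k+j).choose j : ℚ) = ((k+m+1).choose m : ℚ) := by
      rw [← Nat.cast_sum, hs]
    rw [this]
    ring_nf

private lemma natkey (m n : ℕ) : (m - n) * (m+n).choose (2*n) = (m+n) * (m+n-1).choose (2*n) := by
  rcases Nat.eq_zero_or_pos (m+n) with h0 | h0
  · have hm : m = 0 := by omega
    have hn : n = 0 := by omega
    simp [hm, hn]
  · obtain ⟨t, ht⟩ := Nat.exists_eq_add_of_le h0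
    have key := Nat.choose_mul_succ_eq t (2*n)
    have h3 : m - n = t + 1 - 2*n := by omega
    have h2 : m + n = t + 1 := by omega
    rw [h2, h3, Nat.add_sub_cancel]
    linarith [key]

private lemma qkey (m n : ℕ) (h : n ≤ m) (hm : 1 ≤ m) :
    (2*(m:ℚ))/(((m+n : ℕ)):ℚ) * (((m+n).choose (2*n) : ℕ) : ℚ) =
      (((m+n).choose (2*n) : ℕ) : ℚ) + (((m+n-1).choose (2*n) : ℕ) : ℚ) := by
  have hpos : ((m+n : ℕ) : ℚ) ≠ 0 := by
    have : 0 < m + n := by omega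
    exact_mod_cast this.ne'
  have hc : ((m:ℚ) - n) * (((m+n).choose (2*n) : ℕ) : ℚ)
      = ((m:ℚ) + n) * (((m+n-1).choose (2*n) : ℕ) : ℚ) := by
    have := congrArg (Nat.cast : ℕ → ℚ) (natkey m n)
    push_cast [Nat.cast_sub h] at this
    convert this using 2
  field_simp
  push_cast at hc ⊢
  linear_combination hc

private lemma symmC (m n : ℕ) (h : n ≤ m) : (m+n).choose (m-n) = (m+n).choose (2*n) := by
  have h1 : m - n = (m+n) - 2*n := by omega
  rw [h1]
  exact Nat.choose_symm (by omega)

/-- Touchard's formula for the ordinary ménage numbers: `U_0 = 1`, `U_1 = 0`, and for `n ≥ 2`,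
`U_n = ∑_{k=0}^n (-1)^k (2n/(2n-k)) C(2n-k,k) (n-k)!`. -/
noncomputable def Um (n : ℕ) : ℚ :=
  if n = 0 then 1 else if n = 1 then 0 else
    ∑ k ∈ Finset.range (n + 1),
      (-1 : ℚ) ^ k * ((2 * n : ℚ) / ((2 * n - k : ℕ) : ℚ)) *
        (Nat.choose (2 * n - k) k : ℚ) * ((n - k).factorial : ℚ)

private noncomputable def Sq (m : ℕ) : ℚ :=
  ∑ n ∈ range (m+1), (n.factorial : ℚ) * ((-1:ℚ)^(m-n) * (((m+n).choose (m-n) : ℕ) : ℚ))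

private lemma Skey (m : ℕ) (hm : 2 ≤ m) : Um m = Sq m - Sq (m-1) := by
  obtain ⟨M, rfl⟩ : ∃ M, m = M + 2 := ⟨m - 2, by omega⟩
  have hm1 : M + 2 - 1 = M + 1 := by omega
  rw [hm1]
  have hUm : Um (M+2) = ∑ n ∈ range (M+3),
      (n.factorial : ℚ) * ((-1:ℚ)^(M+2-n) *
        ((2*((M+2:ℕ):ℚ))/(((M+2+n : ℕ)):ℚ) * (((M+2+n).choose (2*n) : ℕ) : ℚ))) := by
    rw [Um, if_neg (by omega), if_neg (by omega)]
    rw [← Finset.sum_range_reflect (fun k => (-1 : ℚ)^k *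
        (2 * ((M+2 : ℕ) : ℚ) / ((2 * (M+2) - k : ℕ) : ℚ)) *
        (Nat.choose (2 * (M+2) - k) k : ℚ) * (((M+2) - k).factorial : ℚ)) (M+2+1)]
    apply Finset.sum_congr rfl
    intro n hn
    have hn' : n ≤ M + 2 := by simpa [Nat.lt_succ_iff] using mem_range.mp hn
    have e1 : M + 3 - 1 - n = M + 2 - n := by omega
    have e2 : 2 * (M+2) - (M + 2 - n) = M + 2 + n := by omega
    have e3 : M + 2 - (M + 2 - n) = n := by omega
    rw [e1, e2, e3]
    rw [show (M+2+n).choose (M+2-n) = (M+2+n).choose (2*n) from symmC (M+2) n hn']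
    push_cast
    ring
  have hS2 : Sq (M+2) = ∑ n ∈ range (M+3),
      (n.factorial : ℚ) * ((-1:ℚ)^(M+2-n) * (((M+2+n).choose (2*n) : ℕ) : ℚ)) := by
    unfold Sq
    apply Finset.sum_congr rfl
    intro n hn
    have hn' : n ≤ M + 2 := by simpa [Nat.lt_succ_iff] using mem_range.mp hn
    rw [symmC (M+2) n hn']
  have hS1 : Sq (M+1) = -∑ n ∈ range (M+3),
      (n.factorial : ℚ) * ((-1:ℚ)^(M+2-n) * (((M+1+n).choose (2*n) : ℕ) : ℚ)) := by
    unfold Sq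
    rw [Finset.sum_range_succ (fun n => (n.factorial : ℚ) * ((-1:ℚ)^(M+2-n) * (((M+1+n).choose (2*n) : ℕ) : ℚ))) (M+2)]
    rw [show (M+1+(M+2)).choose (2*(M+2)) = 0 from Nat.choose_eq_zero_of_lt (by omega)]
    simp only [Nat.cast_zero, mul_zero, zero_mul, add_zero]
    rw [← Finset.sum_neg_distrib]
    apply Finset.sum_congr rfl
    intro n hn
    have hn' : n ≤ M + 1 := by simpa [Nat.lt_succ_iff] using mem_range.mp hn
    rw [symmC (M+1) n hn']
    have e4 : M + 2 - n = (M + 1 - n) + 1 := by omega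
    rw [e4, pow_succ]
    ring
  rw [hUm, hS2, hS1, sub_neg_eq_add, ← Finset.sum_add_distrib]
  apply Finset.sum_congr rfl
  intro n hn
  have hn' : n ≤ M + 2 := by simpa [Nat.lt_succ_iff] using mem_range.mp hn
  have hq := qkey (M+2) n hn' (by omega)
  have e5 : M + 2 + n - 1 = M + 1 + n := by omega
  rw [e5] at hq
  rw [hq]
  ring

private lemma coeffR (m n : ℕ) (h : n ≤ m) :
    coeff (R := ℚ) m (X^n * ((1 + X : PowerSeries ℚ))⁻¹ ^ (2*n+1)) =
      (-1:ℚ)^(m-n) * (((m+n).choose (m-n) : ℕ) : ℚ) := by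
  rw [invpow (2*n), coeff_X_pow_mul', if_pos h, coeff_mk]
  have : 2*n + (m-n) = m+n := by omega
  rw [this]

/-- `∑_{n≥0} U_n x^n = x + (1-x) ∑_{n≥0} n! x^n/(1+x)^{2n+1}` as formal power series over `ℚ`.
The right-hand infinite sum is formally summable since its `n`-th summand is divisible by
`x^n`; it is the power series whose `x^m`-coefficient is the finite sum of the
`x^m`-coefficients of the first `m+1` summands, with `(1+x)⁻¹` the formal inverse of `1+x`. -/
theorem U_gf_eq :
    (PowerSeries.mk fun n => Um n) =
      PowerSeries.X + (1 - PowerSeries.X) *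
        PowerSeries.mk (fun m =>
          ∑ n ∈ Finset.range (m + 1),
            (n.factorial : ℚ) *
              PowerSeries.coeff (R := ℚ) m
                (PowerSeries.X ^ n *
                  ((1 + PowerSeries.X : PowerSeries ℚ))⁻¹ ^ (2 * n + 1))) := by
  have hmk : (PowerSeries.mk (fun m =>
      ∑ n ∈ Finset.range (m + 1),
        (n.factorial : ℚ) *
          PowerSeries.coeff (R := ℚ) m
            (PowerSeries.X ^ n *
              ((1 + PowerSeries.X : PowerSeries ℚ))⁻¹ ^ (2 * n + 1)))) =
      PowerSeries.mk Sq := by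
    ext m
    rw [coeff_mk, coeff_mk]
    unfold Sq
    apply Finset.sum_congr rfl
    intro n hn
    have hn' : n ≤ m := by simpa [Nat.lt_succ_iff] using mem_range.mp hn
    rw [coeffR m n hn']
  rw [hmk]
  ext m
  rw [coeff_mk, map_add, sub_mul, one_mul, map_sub, PowerSeries.coeff_X]
  cases m with
  | zero =>
    rw [coeff_zero_X_mul, coeff_mk]
    simp [Um, Sq]
  | succ m =>
    rw [coeff_succ_X_mul, coeff_mk, coeff_mk]
    cases m with
    | zero =>
      simp only [if_pos rfl]
      have h0 : Sq 0 = 1 := by simp [Sq]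
      have h1 : Sq 1 = 0 := by
        unfold Sq
        rw [Finset.sum_range_succ, Finset.sum_range_succ, Finset.sum_range_zero]
        norm_num
      rw [h0, h1, Um]
      norm_num
    | succ m =>
      rw [if_neg (by omega)]
      rw [Skey (m+2) (by omega)]
      norm_num
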